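/- Fix integers n and q with 1 ≤ q and 2q ≤ n, and let K be the subgroup of SU(n) consisting of matrices that are block-diagonal with respect to the partition (q, n−q) of the index set (i.e., R ∈ SU(n) with R i j = 0 whenever exactly one of the indices i, j is < q). Let ω = e^{2πi/n} and H = {ωᵏ·I : k = 0, 1, …, n−1}. Then: (i) every element of H lies in K and satisfies h X h⁻¹ = X for all X ∈ SU(n); and (ii) there exists a matrix X ∈ SU(n) such that for every R ∈ K, R X R⁻¹ = X holds if and only if R ∈ H. In particular, the minimal isotropy group of the conjugation action of K on SU(n) is the finite abelian group H. -/

import Mathlib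

open Matrix
open Fin.NatCast

/-- The cyclic shift matrix. -/
noncomputable def Cyc (m : ℕ) : Matrix (Fin (m+1)) (Fin (m+1)) ℂ :=
  Matrix.of fun i j => if j = i + 1 then (1:ℂ) else 0

lemma Cyc_eq_perm (m : ℕ) : Cyc m = (finRotate (m+1)).permMatrix ℂ := by
  ext i j
  simp [Cyc, Equiv.Perm.permMatrix, PEquiv.toMatrix_apply, Equiv.toPEquiv_apply, Option.mem_def,
    eq_comm]

lemma det_Cyc (m : ℕ) : (Cyc m).det = (-1)^m := by
  rw [Cyc_eq_perm, det_permutation, sign_finRotate]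
  push_cast
  simp

lemma mul_Cyc (m : ℕ) (R : Matrix (Fin (m+1)) (Fin (m+1)) ℂ) (i j : Fin (m+1)) :
    (R * Cyc m) i j = R i (j - 1) := by
  rw [mul_apply, Finset.sum_eq_single (j - 1)]
  · simp [Cyc, sub_add_cancel]
  · intro k _ hk
    have : ¬ (j = k + 1) := fun h => hk (by rw [h]; exact (add_sub_cancel_right k 1).symm ▸ rfl)
    simp [Cyc, this]
  · simp

lemma Cyc_mul (m : ℕ) (R : Matrix (Fin (m+1)) (Fin (m+1)) ℂ) (i j : Fin (m+1)) :
    (Cyc m * R) i j = R (i + 1) j := by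
  rw [mul_apply, Finset.sum_eq_single (i + 1)]
  · simp [Cyc]
  · intro k _ hk; simp [Cyc, hk]
  · simp

lemma Cyc_unitary (m : ℕ) : star (Cyc m) * Cyc m = 1 := by
  ext i j
  rw [mul_apply, Finset.sum_eq_single (i - 1)]
  · simp [Cyc, conjTranspose_apply, sub_add_cancel, one_apply, eq_comm]
  · intro k _ hk
    have : ¬ (i = k + 1) := fun h => hk (by rw [h, add_sub_cancel_right])
    simp [Cyc, conjTranspose_apply, this]
  · simp

noncomputable def zet (m : ℕ) : ℂ := Complex.exp ((Real.pi * m / (m+1) : ℝ) * Complex.I)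

lemma zet_pow (m : ℕ) : zet m ^ (m+1) = (-1)^m := by
  rw [zet, ← Complex.exp_nat_mul]
  have h1 : ((m:ℂ)+1) ≠ 0 := Nat.cast_add_one_ne_zero m
  have : ((m+1 : ℕ):ℂ) * (((Real.pi * m / (m+1) : ℝ):ℂ) * Complex.I)
      = (m:ℕ) * ((Real.pi:ℂ) * Complex.I) := by
    push_cast
    field_simp
  rw [this, Complex.exp_nat_mul, Complex.exp_pi_mul_I]

lemma zet_star (m : ℕ) : star (zet m) * zet m = 1 := by
  show (starRingEnd ℂ) (zet m) * zet m = 1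
  rw [zet, ← Complex.exp_conj, ← Complex.exp_add]
  have : (starRingEnd ℂ) (((Real.pi * m / (m+1) : ℝ):ℂ) * Complex.I)
      = -(((Real.pi * m / (m+1) : ℝ):ℂ) * Complex.I) := by
    simp [Complex.conj_ofReal]
  rw [this, neg_add_cancel, Complex.exp_zero]


/-- **Minimal isotropy group for the conjugation action of `K` on `SU(n)` (type AIII).**
`K` is the block-diagonal subgroup of `SU(n)` (blocks of sizes `q` and `n - q`),
`ω = e^{2πi/n}` and `H = {ωᵏ • I : k = 0, …, n-1}`.  Then every element of `H` lies in `K`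
and is fixed-point-free under conjugation (it commutes with everything in `SU(n)`), and
there is a matrix `X ∈ SU(n)` whose isotropy group in `K` is exactly `H`. -/
theorem stmt2 (n q : ℕ) (hq : 1 ≤ q) (hqn : 2 * q ≤ n)
    (ω : ℂ) (hω : ω = Complex.exp (2 * Real.pi * Complex.I / n))
    (H : Set (Matrix (Fin n) (Fin n) ℂ))
    (hH : H = {M | ∃ k : ℕ, k < n ∧ M = ω ^ k • (1 : Matrix (Fin n) (Fin n) ℂ)}) :
    -- (i) every element of `H` lies in `K` and acts trivially by conjugation on `SU(n)`
    (∀ h ∈ H,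
      (h ∈ Matrix.specialUnitaryGroup (Fin n) ℂ ∧
        ∀ i j : Fin n, ((i.val < q ∧ ¬ j.val < q) ∨ (¬ i.val < q ∧ j.val < q)) → h i j = 0) ∧
      ∀ X ∈ Matrix.specialUnitaryGroup (Fin n) ℂ, h * X * h⁻¹ = X) ∧
    -- (ii) some `X ∈ SU(n)` has isotropy group in `K` exactly equal to `H`
    (∃ X ∈ Matrix.specialUnitaryGroup (Fin n) ℂ,
      ∀ R : Matrix (Fin n) (Fin n) ℂ,
        (R ∈ Matrix.specialUnitaryGroup (Fin n) ℂ ∧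
          ∀ i j : Fin n, ((i.val < q ∧ ¬ j.val < q) ∨ (¬ i.val < q ∧ j.val < q)) → R i j = 0) →
        (R * X * R⁻¹ = X ↔ R ∈ H)) := by
  obtain ⟨m, rfl⟩ : ∃ m, n = m + 1 := ⟨n - 1, by omega⟩
  have hωn : ω ^ (m+1) = 1 := by
    rw [hω]
    exact_mod_cast (Complex.isPrimitiveRoot_exp (m+1) (Nat.succ_ne_zero m)).pow_eq_one
  have hωstar : (starRingEnd ℂ) ω * ω = 1 := by
    rw [hω, ← Complex.exp_conj, ← Complex.exp_add]
    have : (starRingEnd ℂ) (2 * (Real.pi:ℂ) * Complex.I / ((m+1 : ℕ):ℂ))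
        = -(2 * (Real.pi:ℂ) * Complex.I / ((m+1 : ℕ):ℂ)) := by
      simp [map_div₀, Complex.conj_ofReal, map_ofNat]
      ring
    rw [this, neg_add_cancel, Complex.exp_zero]
  have hωne : ω ≠ 0 := by rw [hω]; exact Complex.exp_ne_zero _
  -- scalar matrices conjugate trivially
  have hconj : ∀ (c : ℂ), c ≠ 0 → ∀ X : Matrix (Fin (m+1)) (Fin (m+1)) ℂ,
      (c • (1 : Matrix (Fin (m+1)) (Fin (m+1)) ℂ)) * X * (c • (1 : Matrix (Fin (m+1)) (Fin (m+1)) ℂ))⁻¹ = X := by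
    intro c hc X
    have hinv : (c • (1 : Matrix (Fin (m+1)) (Fin (m+1)) ℂ))⁻¹
        = c⁻¹ • (1 : Matrix (Fin (m+1)) (Fin (m+1)) ℂ) := by
      apply inv_eq_right_inv
      rw [smul_mul_assoc, mul_smul_comm, one_mul, smul_smul, mul_inv_cancel₀ hc, one_smul]
    rw [hinv, smul_mul_assoc, one_mul, mul_smul_comm, mul_one, smul_smul,
      inv_mul_cancel₀ hc, one_smul]
  have part1 : ∀ h ∈ H,
      (h ∈ Matrix.specialUnitaryGroup (Fin (m+1)) ℂ ∧
        ∀ i j : Fin (m+1), ((i.val < q ∧ ¬ j.val < q) ∨ (¬ i.val < q ∧ j.val < q)) → h i j = 0) ∧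
      ∀ X ∈ Matrix.specialUnitaryGroup (Fin (m+1)) ℂ, h * X * h⁻¹ = X := by
    intro h hh
    rw [hH] at hh
    obtain ⟨k, hk, rfl⟩ := hh
    refine ⟨⟨?_, ?_⟩, fun X _ => hconj _ (pow_ne_zero _ hωne) X⟩
    · rw [mem_specialUnitaryGroup_iff]
      constructor
      · rw [mem_unitaryGroup_iff', star_smul, star_one, smul_mul_assoc, mul_smul_comm,
          one_mul, smul_smul]
        have : star (ω ^ k) * ω ^ k = 1 := by
          show (starRingEnd ℂ) (ω ^ k) * ω ^ k = 1
          rw [map_pow, ← mul_pow, hωstar, one_pow]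
        rw [this, one_smul]
      · rw [det_smul, det_one, Fintype.card_fin, mul_one, ← pow_mul, mul_comm, pow_mul,
          hωn, one_pow]
    · intro i j hij
      have hne : i ≠ j := by
        rcases hij with ⟨h1, h2⟩ | ⟨h1, h2⟩ <;> (intro e; subst e; tauto)
      simp [Matrix.smul_apply, Matrix.one_apply_ne hne]
  refine ⟨part1, ?_⟩
  -- part (ii)
  set C := Cyc m with hCdef
  set ζ := zet m with hζdef
  have hζne : ζ ≠ 0 := Complex.exp_ne_zero _
  refine ⟨ζ • C, ?_, ?_⟩
  · rw [mem_specialUnitaryGroup_iff]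
    constructor
    · rw [mem_unitaryGroup_iff', star_smul, smul_mul_assoc, mul_smul_comm, smul_smul,
        Cyc_unitary, zet_star, one_smul]
    · rw [det_smul, Fintype.card_fin, det_Cyc, zet_pow, ← mul_pow, neg_one_mul, neg_neg, one_pow]
  · rintro R ⟨hRSU, hRblk⟩
    rw [mem_specialUnitaryGroup_iff] at hRSU
    constructor
    · intro hfix
      have hdet : IsUnit R.det := by rw [hRSU.2]; exact isUnit_one
      haveI := R.invertibleOfIsUnitDet hdet
      have hcomm : R * (ζ • C) = (ζ • C) * R :=
        (mul_inv_eq_iff_eq_mul_of_invertible R (R * (ζ • C)) (ζ • C)).mp hfix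
      have hCR : R * C = C * R := by
        apply smul_right_injective _ hζne
        simpa [mul_smul_comm, smul_mul_assoc] using hcomm
      have hshift : ∀ i j : Fin (m+1), R (i+1) (j+1) = R i j := by
        intro i j
        have h1 := congrFun (congrFun hCR i) (j+1)
        rw [mul_Cyc, Cyc_mul, add_sub_cancel_right] at h1
        exact h1.symm
      have hshiftn : ∀ (t : ℕ) (i j : Fin (m+1)), R (i + (t : Fin (m+1))) (j + (t : Fin (m+1))) = R i j := by
        intro t
        induction t with
        | zero => simp
        | succ s ih =>
          intro i j
          have hc : ((s+1 : ℕ) : Fin (m+1)) = (s : Fin (m+1)) + 1 := by push_cast; ring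
          rw [hc, ← add_assoc, ← add_assoc, hshift, ih]
      have hdiag : ∀ i j : Fin (m+1), R i j = R 0 (j - i) := by
        intro i j
        have h2 := hshiftn i.val 0 (j - i)
        rw [Fin.cast_val_eq_self, zero_add, sub_add_cancel] at h2
        exact h2
      have h0q : ((0 : Fin (m+1)) : ℕ) < q := by simp; omega
      have hqm : q < m + 1 := by omega
      have hzero : ∀ d : Fin (m+1), d ≠ 0 → R 0 d = 0 := by
        intro d hd
        by_cases hdq : (d : ℕ) < q
        · have hd1 : (d : ℕ) ≠ 0 := fun h => hd (Fin.ext (by simp [h]))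
          set t := q - (d : ℕ) with ht
          have htn : t < m + 1 := by omega
          have hvt : ((t : Fin (m+1)) : ℕ) = t := Fin.val_cast_of_lt htn
          have hvdt : (d + (t : Fin (m+1))).val = q := by
            rw [Fin.val_add, hvt, Nat.mod_eq_of_lt (by omega)]
            omega
          have hblk := hRblk ((t : Fin (m+1))) (d + (t : Fin (m+1)))
            (Or.inl ⟨by rw [hvt]; omega, by rw [hvdt]; omega⟩)
          have hkey := hshiftn t 0 d
          rw [zero_add] at hkey
          rw [← hkey]
          exact hblk
        · exact hRblk 0 d (Or.inl ⟨h0q, hdq⟩)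
      obtain ⟨c, hc⟩ : ∃ c, R = c • (1 : Matrix (Fin (m+1)) (Fin (m+1)) ℂ) := by
        refine ⟨R 0 0, ?_⟩
        ext i j
        by_cases hij : i = j
        · subst hij
          rw [hdiag i i, sub_self]
          simp [Matrix.smul_apply, Matrix.one_apply]
        · rw [hdiag i j, hzero _ (sub_ne_zero_of_ne (fun h => hij h.symm))]
          simp [Matrix.smul_apply, Matrix.one_apply_ne hij]
      have hdet1 : c ^ (m+1) = 1 := by
        have h3 := hRSU.2
        rw [hc, det_smul, det_one, Fintype.card_fin, mul_one] at h3
        exact h3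
      obtain ⟨k, hk, hck⟩ :=
        (Complex.isPrimitiveRoot_exp (m+1) (Nat.succ_ne_zero m)).eq_pow_of_pow_eq_one hdet1
      rw [hH]
      refine ⟨k, hk, ?_⟩
      rw [hc, hω]
      congr 1
      exact_mod_cast hck.symm
    · intro hR
      exact (part1 R hR).2 _ (by
        rw [mem_specialUnitaryGroup_iff]
        constructor
        · rw [mem_unitaryGroup_iff', star_smul, smul_mul_assoc, mul_smul_comm, smul_smul,
            Cyc_unitary, zet_star, one_smul]
        · rw [det_smul, Fintype.card_fin, det_Cyc, zet_pow, ← mul_pow, neg_one_mul, neg_neg,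
            one_pow])
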